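/- arXiv:1101.5926 — 3 statements merged into one kernel-verified Lean document; each statement's English description precedes it below -/
import Mathlib

section
/- Let G=(V,W) be an edge-weighted graph with positive generalized degrees, let u_1,...,u_k ∈ R^n be pairwise orthogonal unit-norm vectors, and let X be the n×k matrix with columns D^{-1/2}u_1,...,D^{-1/2}u_k. For a k-partition P_k = (V_1,...,V_k) of V into nonempty parts, define the normalized partition vectors z_1,...,z_k by z_{a,j} = 1/√(Vol(V_a)) scaled so that D^{1/2}z_1,...,D^{1/2}z_k form an orthonormal system (i.e., z_{a,j} = 1/√(Vol(V_a)) if j ∈ V_a and 0 otherwise), and let F = Span{D^{1/2}z_1,...,D^{1/2}z_k}. Then the weighted k-variance of the rows of X with respect to the partition P_k satisfies S_k²(P_k, X) = Σ_{i=1}^k dist²(u_i, F), where dist(u,F) is the Euclidean distance of u from the subspace F. -/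
open Finset Matrix

noncomputable section

/-- weighted cut between two vertex subsets: `w(X,Y) = ∑_{i∈X} ∑_{j∈Y} w_{ij}` -/
def wcut {n : ℕ} (W : Matrix (Fin n) (Fin n) ℝ) (X Y : Finset (Fin n)) : ℝ :=
  ∑ i ∈ X, ∑ j ∈ Y, W i j

/-- generalized degree `d_i = ∑_j w_{ij}` -/
def gdeg {n : ℕ} (W : Matrix (Fin n) (Fin n) ℝ) (i : Fin n) : ℝ := ∑ j, W i j

/-- volume of a vertex subset: `Vol(U) = ∑_{i∈U} d_i` -/
def gvol {n : ℕ} (W : Matrix (Fin n) (Fin n) ℝ) (U : Finset (Fin n)) : ℝ :=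
  ∑ i ∈ U, gdeg W i

/-- the normalized adjacency matrix `D^{-1/2} W D^{-1/2}` -/
def normAdj {n : ℕ} (W : Matrix (Fin n) (Fin n) ℝ) : Matrix (Fin n) (Fin n) ℝ :=
  Matrix.of fun i j => W i j / (Real.sqrt (gdeg W i) * Real.sqrt (gdeg W j))

/-- the normalized Laplacian `L_D = I - D^{-1/2} W D^{-1/2}` -/
def normLap {n : ℕ} (W : Matrix (Fin n) (Fin n) ℝ) : Matrix (Fin n) (Fin n) ℝ :=
  1 - normAdj W

/-- the normalized modularity matrix `B_D = D^{-1/2} W D^{-1/2} - √d √dᵀ` -/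
def modMat {n : ℕ} (W : Matrix (Fin n) (Fin n) ℝ) : Matrix (Fin n) (Fin n) ℝ :=
  normAdj W - Matrix.of fun i j => Real.sqrt (gdeg W i) * Real.sqrt (gdeg W j)

/-- Euclidean inner product on `ℝ^n` -/
def dotR {n : ℕ} (u v : Fin n → ℝ) : ℝ := ∑ i, u i * v i

/-- a family of pairwise orthogonal unit-norm vectors of `ℝ^n` -/
def IsOrthonormalSys {m n : ℕ} (u : Fin m → Fin n → ℝ) : Prop :=
  ∀ i j, dotR (u i) (u j) = if i = j then 1 else 0

/-- spectral norm (largest singular value) of a real matrix -/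
def specNorm {n : ℕ} (M : Matrix (Fin n) (Fin n) ℝ) : ℝ :=
  ‖Matrix.toEuclideanCLM (𝕜 := ℝ) M‖

/-- connectivity of the weighted graph (irreducibility of `W`) -/
def gConnected {n : ℕ} (W : Matrix (Fin n) (Fin n) ℝ) : Prop :=
  (SimpleGraph.fromRel fun i j => W i j ≠ 0).Connected

/-- the `a`-th cluster of the partition encoded by `P : Fin n → Fin k` -/
def partSet {n k : ℕ} (P : Fin n → Fin k) (a : Fin k) : Finset (Fin n) :=
  univ.filter fun j => P j = a

/-- `(A,B)` is an `α`-volume regular pair: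
for all `X ⊆ A`, `Y ⊆ B`, `|w(X,Y) - ρ(A,B) Vol(X) Vol(Y)| ≤ α √(Vol(A) Vol(B))`,
where `ρ(A,B) = w(A,B)/(Vol(A) Vol(B))`. -/
def volReg {n : ℕ} (W : Matrix (Fin n) (Fin n) ℝ) (α : ℝ) (A B : Finset (Fin n)) : Prop :=
  ∀ X ⊆ A, ∀ Y ⊆ B,
    |wcut W X Y - wcut W A B / (gvol W A * gvol W B) * (gvol W X * gvol W Y)|
      ≤ α * Real.sqrt (gvol W A * gvol W B)

/-- isoperimetric number `h(G) = min_{U : Vol(U) ≤ 1/2} w(U, U̅)/Vol(U)` -/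
def isoNum {n : ℕ} (W : Matrix (Fin n) (Fin n) ℝ) : ℝ :=
  sInf {r | ∃ U : Finset (Fin n), U.Nonempty ∧ gvol W U ≤ 1/2 ∧ r = wcut W U Uᶜ / gvol W U}

/-- weighted cluster center of scalar vertex representatives -/
def sCenter {n k : ℕ} (d : Fin n → ℝ) (x : Fin n → ℝ) (P : Fin n → Fin k) (a : Fin k) : ℝ :=
  (∑ j ∈ partSet P a, d j)⁻¹ * ∑ j ∈ partSet P a, d j * x j

/-- weighted k-variance of scalar vertex representatives w.r.t. the partition `P` -/
def sVar {n k : ℕ} (d : Fin n → ℝ) (x : Fin n → ℝ) (P : Fin n → Fin k) : ℝ :=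
  ∑ a, ∑ j ∈ partSet P a, d j * (x j - sCenter d x P a) ^ 2

/-- minimum weighted 2-variance `S_2²` of scalar vertex representatives -/
def S2var {n : ℕ} (d : Fin n → ℝ) (x : Fin n → ℝ) : ℝ :=
  sInf {r | ∃ P : Fin n → Fin 2, Function.Surjective P ∧ r = sVar d x P}

/-- weighted cluster center of vector vertex representatives -/
def vCenter {n k m : ℕ} (d : Fin n → ℝ) (x : Fin n → Fin m → ℝ) (P : Fin n → Fin k) (a : Fin k) :
    Fin m → ℝ :=
  fun t => (∑ j ∈ partSet P a, d j)⁻¹ * ∑ j ∈ partSet P a, d j * x j t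

/-- weighted k-variance `S_k²(P, X)` of vector vertex representatives w.r.t. the partition `P` -/
def kVar {n k m : ℕ} (d : Fin n → ℝ) (x : Fin n → Fin m → ℝ) (P : Fin n → Fin k) : ℝ :=
  ∑ a, ∑ j ∈ partSet P a, d j * ∑ t, (x j t - vCenter d x P a t) ^ 2

/-- normalized k-way cut of the partition `P`  -/
def fkCut {n k : ℕ} (W : Matrix (Fin n) (Fin n) ℝ) (P : Fin n → Fin k) : ℝ :=
  ∑ a, ∑ b ∈ univ.filter (fun b => a < b),
    (1 / gvol W (partSet P a) + 1 / gvol W (partSet P b)) * wcut W (partSet P a) (partSet P b)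

/-- minimum normalized k-way cut `f_k(G)` (minimum over k-partitions with nonempty parts) -/
def fkMin {n : ℕ} (k : ℕ) (W : Matrix (Fin n) (Fin n) ℝ) : ℝ :=
  sInf {r | ∃ P : Fin n → Fin k, Function.Surjective P ∧ r = fkCut W P}

/-- normalized k-way Newman-Girvan modularity of the partition `P` -/
def QMod {n k : ℕ} (W : Matrix (Fin n) (Fin n) ℝ) (P : Fin n → Fin k) : ℝ :=
  ∑ a, (gvol W (partSet P a))⁻¹ *
    (∑ i ∈ partSet P a, ∑ j ∈ partSet P a, (W i j - gdeg W i * gdeg W j))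

/-- squared Euclidean distance of a vector from a linear subspace of `ℝ^n` -/
def distSqToSub {n : ℕ} (u : Fin n → ℝ) (F : Submodule ℝ (Fin n → ℝ)) : ℝ :=
  sInf {r | ∃ v ∈ F, r = dotR (u - v) (u - v)}


lemma dotR_nonneg' {n : ℕ} (x : Fin n → ℝ) : 0 ≤ dotR x x :=
  Finset.sum_nonneg fun i _ => mul_self_nonneg _

lemma dotR_sum_left {n : ℕ} {ι : Type*} (s : Finset ι) (f : ι → Fin n → ℝ) (z : Fin n → ℝ) :
    dotR (∑ a ∈ s, f a) z = ∑ a ∈ s, dotR (f a) z := by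
  simp only [dotR, Finset.sum_apply, Finset.sum_mul]
  exact Finset.sum_comm

lemma dotR_smul_left {n : ℕ} (c : ℝ) (y z : Fin n → ℝ) :
    dotR (c • y) z = c * dotR y z := by
  simp [dotR, Finset.mul_sum, mul_assoc]

lemma dotR_add_right {n : ℕ} (x y z : Fin n → ℝ) :
    dotR x (y + z) = dotR x y + dotR x z := by
  simp [dotR, mul_add, Finset.sum_add_distrib]

lemma dotR_smul_right {n : ℕ} (c : ℝ) (x y : Fin n → ℝ) :
    dotR x (c • y) = c * dotR x y := by
  simp [dotR, Finset.mul_sum]; apply Finset.sum_congr rfl; intros; ring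

lemma dotR_zero_right {n : ℕ} (x : Fin n → ℝ) : dotR x 0 = 0 := by simp [dotR]

lemma dotR_self_add {n : ℕ} (a b : Fin n → ℝ) :
    dotR (a + b) (a + b) = dotR a a + 2 * dotR a b + dotR b b := by
  simp only [dotR, Pi.add_apply, Finset.mul_sum, ← Finset.sum_add_distrib]
  apply Finset.sum_congr rfl; intros; ring

lemma distSq_eq_of_proj {n : ℕ} (u p : Fin n → ℝ) (F : Submodule ℝ (Fin n → ℝ))
    (hp : p ∈ F) (horth : ∀ w ∈ F, dotR (u - p) w = 0) :
    distSqToSub u F = dotR (u - p) (u - p) := by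
  have hmem : dotR (u - p) (u - p) ∈ {r | ∃ v ∈ F, r = dotR (u - v) (u - v)} :=
    ⟨p, hp, rfl⟩
  have hlb : ∀ r ∈ {r | ∃ v ∈ F, r = dotR (u - v) (u - v)},
      dotR (u - p) (u - p) ≤ r := by
    rintro r ⟨v, hv, rfl⟩
    have hsplit : u - v = (u - p) + (p - v) := by abel
    rw [hsplit, dotR_self_add, horth (p - v) (F.sub_mem hp hv)]
    have := dotR_nonneg' (p - v)
    linarith
  exact le_antisymm (csInf_le ⟨_, hlb⟩ hmem) (le_csInf ⟨_, hmem⟩ hlb)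

/-- `S_k²(P_k, X) = ∑_{i=1}^k dist²(u_i, F)` where `F` is spanned by the
vectors `D^{1/2} z_a` built from the normalized partition vectors. -/
theorem statement13 {n k : ℕ} (W : Matrix (Fin n) (Fin n) ℝ)
    (hsym : W.IsSymm) (hnn : ∀ i j, 0 ≤ W i j) (hdiag : ∀ i, W i i = 0)
    (hd : ∀ i, 0 < gdeg W i)
    (u : Fin k → Fin n → ℝ) (hortho : IsOrthonormalSys u)
    (P : Fin n → Fin k) (hP : Function.Surjective P) :
    kVar (gdeg W) (fun j t => u t j / Real.sqrt (gdeg W j)) P =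
      ∑ i : Fin k,
        distSqToSub (u i)
          (Submodule.span ℝ
            (Set.range fun a : Fin k => fun j : Fin n =>
              Real.sqrt (gdeg W j) *
                (if P j = a then 1 / Real.sqrt (gvol W (partSet P a)) else 0))) := by
  classical
  have hsqd : ∀ j, Real.sqrt (gdeg W j) * Real.sqrt (gdeg W j) = gdeg W j :=
    fun j => Real.mul_self_sqrt (hd j).le
  have hVolpos : ∀ a : Fin k, 0 < gvol W (partSet P a) := by
    intro a
    obtain ⟨j, hj⟩ := hP a
    apply Finset.sum_pos (fun i _ => hd i)
    exact ⟨j, by simp [partSet, hj]⟩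
  set s : Fin k → ℝ := fun a => 1 / Real.sqrt (gvol W (partSet P a)) with hs_def
  have hss : ∀ a, s a * s a = (gvol W (partSet P a))⁻¹ := by
    intro a
    rw [hs_def]
    rw [div_mul_div_comm, one_mul, Real.mul_self_sqrt (hVolpos a).le, one_div]
  set v : Fin k → Fin n → ℝ := fun a => fun j : Fin n =>
      Real.sqrt (gdeg W j) * (if P j = a then s a else 0) with hv_def
  set F := Submodule.span ℝ (Set.range v) with hF
  -- orthonormality of v
  have hvv : ∀ a b, dotR (v a) (v b) = if a = b then 1 else 0 := by
    intro a b
    have key : ∀ j, v a j * v b j =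
        if P j = a ∧ P j = b then gdeg W j * (s a * s b) else 0 := by
      intro j
      by_cases h1 : P j = a <;> by_cases h2 : P j = b
      · simp only [hv_def, if_pos h1, if_pos h2]
        rw [if_pos (show P j = a ∧ P j = b from ⟨h1, h2⟩), mul_mul_mul_comm, hsqd j]
      · simp only [hv_def, if_pos h1, if_neg h2, mul_zero, zero_mul]
        rw [if_neg (show ¬(P j = a ∧ P j = b) from fun h => h2 h.2)]
      · simp only [hv_def, if_neg h1, if_pos h2, mul_zero, zero_mul]
        rw [if_neg (show ¬(P j = a ∧ P j = b) from fun h => h1 h.1)]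
      · simp only [hv_def, if_neg h1, if_neg h2, mul_zero, zero_mul]
        rw [if_neg (show ¬(P j = a ∧ P j = b) from fun h => h1 h.1)]
    unfold dotR
    rw [Finset.sum_congr rfl fun j _ => key j]
    by_cases hab : a = b
    · subst hab
      simp only [and_self, if_pos rfl]
      rw [← Finset.sum_filter, ← Finset.sum_mul]
      have : ∑ j ∈ univ.filter (fun j => P j = a), gdeg W j = gvol W (partSet P a) := rfl
      rw [this, hss a, mul_inv_cancel₀ (hVolpos a).ne']
      simp
    · rw [if_neg hab]
      apply Finset.sum_eq_zero
      intro j _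
      rw [if_neg]
      rintro ⟨h1, h2⟩
      exact hab (h1 ▸ h2)
  set p : Fin k → Fin n → ℝ := fun t => ∑ a, dotR (u t) (v a) • v a with hp_def
  have hpF : ∀ t, p t ∈ F :=
    fun t => Submodule.sum_mem _ fun a _ =>
      Submodule.smul_mem _ _ (Submodule.subset_span (Set.mem_range_self a))
  have hpv : ∀ t b, dotR (p t) (v b) = dotR (u t) (v b) := by
    intro t b
    rw [hp_def]
    rw [dotR_sum_left]
    simp only [dotR_smul_left, hvv, mul_ite, mul_one, mul_zero]
    simp
  have horth : ∀ t, ∀ w ∈ F, dotR (u t - p t) w = 0 := by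
    intro t w hw
    induction hw using Submodule.span_induction with
    | mem x hx =>
      obtain ⟨b, rfl⟩ := hx
      have : u t - p t = u t + (-1 : ℝ) • p t := by
        funext j; simp; ring
      rw [this]
      rw [show dotR (u t + (-1 : ℝ) • p t) (v b)
          = dotR (u t) (v b) + (-1) * dotR (p t) (v b) by
        rw [← dotR_smul_left]
        simp only [dotR, Pi.add_apply, Pi.smul_apply, smul_eq_mul, add_mul,
          Finset.sum_add_distrib]]
      rw [hpv t b]; ring
    | zero => exact dotR_zero_right _
    | add x y hx hy ihx ihy => rw [dotR_add_right, ihx, ihy, add_zero]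
    | smul c x hx ihx => rw [dotR_smul_right, ihx, mul_zero]
  -- rewrite RHS using projection
  have hRHS : ∀ i : Fin k, distSqToSub (u i) F = dotR (u i - p i) (u i - p i) :=
    fun i => distSq_eq_of_proj _ _ _ (hpF i) (horth i)
  rw [Finset.sum_congr rfl fun i _ => hRHS i]
  -- value of p at a coordinate
  have hpj : ∀ t j, p t j = dotR (u t) (v (P j)) * (Real.sqrt (gdeg W j) * s (P j)) := by
    intro t j
    rw [hp_def]
    simp only [Finset.sum_apply, Pi.smul_apply, smul_eq_mul]
    have e : ∀ a : Fin k, dotR (u t) (v a) * v a j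
        = if P j = a then dotR (u t) (v a) * (Real.sqrt (gdeg W j) * s a) else 0 := by
      intro a; by_cases h : P j = a <;> simp [hv_def, h] <;> ring
    rw [Finset.sum_congr rfl fun a _ => e a]
    simp
  -- center formula
  have hvC : ∀ t a, vCenter (gdeg W) (fun j t => u t j / Real.sqrt (gdeg W j)) P a t
      = dotR (u t) (v a) * s a := by
    intro t a
    have e1 : ∀ j : Fin n, u t j * v a j
        = if P j = a then s a * (Real.sqrt (gdeg W j) * u t j) else 0 := by
      intro j; by_cases h : P j = a <;> simp [hv_def, h] <;> ring
    have h1 : dotR (u t) (v a) = s a * ∑ j ∈ partSet P a, Real.sqrt (gdeg W j) * u t j := by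
      unfold dotR
      rw [Finset.sum_congr rfl fun j _ => e1 j, ← Finset.sum_filter, ← Finset.mul_sum]
      rfl
    have e2 : ∀ j ∈ partSet P a, gdeg W j * ((fun j t => u t j / Real.sqrt (gdeg W j)) j t)
        = Real.sqrt (gdeg W j) * u t j := by
      intro j _
      have hne : Real.sqrt (gdeg W j) ≠ 0 := Real.sqrt_ne_zero'.2 (hd j)
      simp only
      rw [← hsqd j]
      field_simp
      rw [Real.sqrt_sq (Real.sqrt_nonneg _)]
      ring
    unfold vCenter
    rw [Finset.sum_congr rfl e2, h1]
    have hgv : (∑ j ∈ partSet P a, gdeg W j) = gvol W (partSet P a) := rfl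
    rw [hgv, ← hss a]
    ring
  -- per-term identity
  have hterm : ∀ t, ∀ j : Fin n,
      gdeg W j * ((u t j / Real.sqrt (gdeg W j))
        - vCenter (gdeg W) (fun j t => u t j / Real.sqrt (gdeg W j)) P (P j) t) ^ 2
      = (u t j - p t j) ^ 2 := by
    intro t j
    rw [hvC, hpj]
    have hne : Real.sqrt (gdeg W j) ≠ 0 := Real.sqrt_ne_zero'.2 (hd j)
    rw [← hsqd j]
    field_simp
    rw [Real.sqrt_sq (Real.sqrt_nonneg _)]
  -- assemble
  unfold kVar
  calc ∑ a, ∑ j ∈ partSet P a, gdeg W j *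
        ∑ t, ((u t j / Real.sqrt (gdeg W j))
          - vCenter (gdeg W) (fun j t => u t j / Real.sqrt (gdeg W j)) P a t) ^ 2
      = ∑ a, ∑ j ∈ partSet P a, ∑ t, (u t j - p t j) ^ 2 := by
        apply Finset.sum_congr rfl
        intro a _
        apply Finset.sum_congr rfl
        intro j hj
        have hPj : P j = a := by simpa [partSet] using hj
        rw [Finset.mul_sum]
        apply Finset.sum_congr rfl
        intro t _
        rw [← hPj] at *
        exact hterm t j
    _ = ∑ j, ∑ t, (u t j - p t j) ^ 2 := by
        exact Finset.sum_fiberwise _ _ _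
    _ = ∑ t, ∑ j, (u t j - p t j) ^ 2 := Finset.sum_comm
    _ = ∑ i, dotR (u i - p i) (u i - p i) := by
        apply Finset.sum_congr rfl
        intro i _
        unfold dotR
        apply Finset.sum_congr rfl
        intro j _
        simp [sq]


end
end

section
/- Let u_1,...,u_k ∈ R^n be an orthonormal system and let F ⊆ R^n be a k-dimensional subspace such that Σ_{i=1}^k dist²(u_i, F) = s², where dist(u,F) is the Euclidean distance of u from F. Then there exists an orthonormal system v_1,...,v_k ∈ F such that Σ_{i=1}^k ‖u_i − v_i‖² ≤ 2s². -/
open Finset Matrix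

noncomputable section

open RealInnerProductSpace

lemma dotR_eq_inner {n : ℕ} (u v : EuclideanSpace ℝ (Fin n)) : dotR u.ofLp v.ofLp = ⟪u, v⟫ := by
  simp [dotR, PiLp.inner_apply, RCLike.inner_apply, mul_comm]

lemma dotR_self {n : ℕ} (x w : EuclideanSpace ℝ (Fin n)) :
    dotR (x.ofLp - w.ofLp) (x.ofLp - w.ofLp) = ‖x - w‖ ^ 2 := by
  rw [← WithLp.ofLp_sub, dotR_eq_inner, real_inner_self_eq_norm_sq]

/-- an orthonormal system at squared distance `s²` from a k-dimensional
subspace `F` can be approximated by an orthonormal system inside `F` within `2s²`. -/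
theorem statement14 {n k : ℕ} (u : Fin k → Fin n → ℝ) (hu : IsOrthonormalSys u)
    (F : Submodule ℝ (Fin n → ℝ)) (hF : Module.finrank ℝ F = k)
    (s : ℝ) (hs : 0 ≤ s)
    (hdist : ∑ i : Fin k, distSqToSub (u i) F = s ^ 2) :
    ∃ v : Fin k → Fin n → ℝ, (∀ i, v i ∈ F) ∧ IsOrthonormalSys v ∧
      ∑ i : Fin k, dotR (u i - v i) (u i - v i) ≤ 2 * s ^ 2 := by
  classical
  let F' : Submodule ℝ (EuclideanSpace ℝ (Fin n)) :=
    F.comap (WithLp.linearEquiv 2 ℝ (Fin n → ℝ)).toLinearMap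
  let U : Fin k → EuclideanSpace ℝ (Fin n) := fun i => WithLp.toLp 2 (u i)
  have hu' : ∀ i j, ⟪U i, U j⟫ = if i = j then 1 else 0 := fun i j => by
    rw [← dotR_eq_inner]; exact hu i j
  let P := F'.orthogonalProjection
  let y : Fin k → EuclideanSpace ℝ (Fin n) := fun i => (P (U i) : EuclideanSpace ℝ (Fin n))
  have hyF : ∀ i, y i ∈ F' := fun i => (P (U i)).2
  -- distance to subspace equals distance to projection
  have hdistEq : ∀ i, distSqToSub (u i) F = ‖U i - y i‖ ^ 2 := by
    intro i
    apply IsLeast.csInf_eq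
    constructor
    · exact ⟨y i, hyF i, (dotR_self (U i) (y i)).symm⟩
    · rintro r ⟨v, hv, rfl⟩
      let v' : EuclideanSpace ℝ (Fin n) := WithLp.toLp 2 v
      have hv' : v' ∈ F' := hv
      have hio : ⟪U i - y i, y i - v'⟫ = 0 := by
        rw [real_inner_comm]
        exact (Submodule.sub_starProjection_mem_orthogonal (K := F') (U i)) _ (Submodule.sub_mem _ (hyF i) hv')
      have hexp : ‖U i - v'‖ ^ 2
          = ‖U i - y i‖ ^ 2 + 2 * ⟪U i - y i, y i - v'⟫ + ‖y i - v'‖ ^ 2 := by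
        rw [← norm_add_sq_real]
        congr 2
        abel
      have h2 : ‖U i - y i‖ ^ 2 ≤ ‖U i - v'‖ ^ 2 := by
        rw [hexp, hio]
        nlinarith [sq_nonneg ‖y i - v'‖]
      exact h2.trans_eq (dotR_self (U i) v').symm
  have hs2 : ∑ i, (1 - ⟪y i, y i⟫) = s ^ 2 := by
    rw [← hdist]
    refine Finset.sum_congr rfl fun i _ => ?_
    rw [hdistEq i, norm_sub_sq_real]
    have h1 : ‖U i‖ ^ 2 = 1 := by
      rw [← real_inner_self_eq_norm_sq]; simpa using hu' i i
    have h2 : ⟪U i, y i⟫ = ⟪y i, y i⟫ := by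
      have h0 : ⟪U i - y i, y i⟫ = 0 := by
        rw [real_inner_comm]
        exact (Submodule.sub_starProjection_mem_orthogonal (K := F') (U i)) _ (hyF i)
      rw [inner_sub_left] at h0; linarith
    rw [h1, h2, ← real_inner_self_eq_norm_sq]
    ring
  -- contraction property
  have hUnorm : ∀ c : Fin k → ℝ, ‖∑ i, c i • U i‖ ^ 2 = ∑ i, c i ^ 2 := by
    intro c
    rw [← real_inner_self_eq_norm_sq]
    simp only [sum_inner, inner_sum, real_inner_smul_left, real_inner_smul_right, hu']
    simp [mul_ite, Finset.sum_ite_eq', sq]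
  have hcontr : ∀ c : Fin k → ℝ, ‖∑ i, c i • y i‖ ^ 2 ≤ ∑ i, c i ^ 2 := by
    intro c
    have h1 : (∑ i, c i • y i) = ((P (∑ i, c i • U i) : F') : EuclideanSpace ℝ (Fin n)) := by
      rw [map_sum]
      push_cast
      refine Finset.sum_congr rfl fun i _ => ?_
      rw [_root_.map_smul]
      rfl
    have h2 : ‖∑ i, c i • y i‖ ≤ ‖∑ i, c i • U i‖ := by
      rw [h1]
      calc ‖((P (∑ i, c i • U i) : F') : EuclideanSpace ℝ (Fin n))‖
          = ‖P (∑ i, c i • U i)‖ := rfl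
        _ ≤ ‖P‖ * ‖∑ i, c i • U i‖ := P.le_opNorm _
        _ ≤ 1 * ‖∑ i, c i • U i‖ := by
            exact mul_le_mul_of_nonneg_right (Submodule.orthogonalProjection_norm_le F') (norm_nonneg _)
        _ = ‖∑ i, c i • U i‖ := one_mul _
    calc ‖∑ i, c i • y i‖ ^ 2 ≤ ‖∑ i, c i • U i‖ ^ 2 := by
          exact pow_le_pow_left₀ (norm_nonneg _) h2 2
      _ = ∑ i, c i ^ 2 := hUnorm c
  -- Gram matrix and spectral decomposition
  let G : Matrix (Fin k) (Fin k) ℝ := Matrix.of fun i j => ⟪y i, y j⟫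
  have hG : G.IsHermitian := by
    ext i j
    simp only [G, Matrix.conjTranspose_apply, Matrix.of_apply, star_trivial]
    exact real_inner_comm _ _
  let d : Fin k → ℝ := hG.eigenvalues
  let q := hG.eigenvectorBasis
  let z : Fin k → EuclideanSpace ℝ (Fin n) := fun a => ∑ i, q a i • y i
  have hzF : ∀ a, z a ∈ F' := fun a =>
    Submodule.sum_mem _ fun i _ => Submodule.smul_mem _ _ (hyF i)
  have hzexp : ∀ a c, ⟪z a, z c⟫ = ∑ i, ∑ j, q a i * (q c j * ⟪y i, y j⟫) := by
    intro a c
    simp only [z, sum_inner, inner_sum, real_inner_smul_left, real_inner_smul_right]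
    rw [Finset.sum_comm]
    exact Finset.sum_congr rfl fun i _ => Finset.sum_congr rfl fun j _ => by ring
  have hz : ∀ a c, ⟪z a, z c⟫ = if a = c then d a else 0 := by
    intro a c
    have hmv := hG.mulVec_eigenvectorBasis c
    have h1 : ∀ i, ∑ j, G i j * q c j = d c * q c i := fun i => by
      have h2 := congrFun hmv i
      simpa [Matrix.mulVec, dotProduct] using h2
    have hqq : ∑ i, q a i * q c i = if a = c then 1 else 0 := by
      have h3 := orthonormal_iff_ite.mp q.orthonormal a c
      rw [← h3]
      simp [PiLp.inner_apply, RCLike.inner_apply, mul_comm]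
    calc ⟪z a, z c⟫ = ∑ i, ∑ j, q a i * (q c j * ⟪y i, y j⟫) := hzexp a c
      _ = ∑ i, q a i * (d c * q c i) := by
          refine Finset.sum_congr rfl fun i _ => ?_
          rw [← h1 i, Finset.mul_sum]
          refine Finset.sum_congr rfl fun j _ => ?_
          simp only [G, Matrix.of_apply]; ring
      _ = d c * ∑ i, q a i * q c i := by rw [Finset.mul_sum]; exact Finset.sum_congr rfl fun i _ => by ring
      _ = if a = c then d a else 0 := by
          rw [hqq]
          split <;> rename_i h <;> simp [h]
  -- Parseval rows
  have hrow : ∀ i j : Fin k, ∑ a, q a i * q a j = if i = j then 1 else 0 := by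
    intro i j
    have h := q.sum_inner_mul_inner (EuclideanSpace.single i (1:ℝ)) (EuclideanSpace.single j (1:ℝ))
    have h2 : ∀ a, (inner ℝ (EuclideanSpace.single i (1:ℝ)) (q a) : ℝ) = q a i := by
      intro a; rw [EuclideanSpace.inner_single_left]; simp
    have h3 : ∀ a, (inner ℝ (q a) (EuclideanSpace.single j (1:ℝ)) : ℝ) = q a j := by
      intro a; rw [EuclideanSpace.inner_single_right]; simp
    have h4 : (inner ℝ (EuclideanSpace.single i (1:ℝ)) (EuclideanSpace.single j (1:ℝ)) : ℝ)
        = if i = j then 1 else 0 := by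
      rw [EuclideanSpace.inner_single_left]
      simp [EuclideanSpace.single_apply, eq_comm]
    rw [← h4, ← h]
    exact Finset.sum_congr rfl fun a _ => by rw [h2, h3]
  -- trace identity
  have htr : ∑ a, d a = ∑ i, ⟪y i, y i⟫ := by
    calc ∑ a, d a = ∑ a, ⟪z a, z a⟫ := by
          refine Finset.sum_congr rfl fun a _ => ?_
          rw [hz a a]; simp
      _ = ∑ a, ∑ i, ∑ j, q a i * (q a j * ⟪y i, y j⟫) :=
          Finset.sum_congr rfl fun a _ => hzexp a a
      _ = ∑ i, ∑ j, (∑ a, q a i * q a j) * ⟪y i, y j⟫ := by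
          rw [Finset.sum_comm]
          refine Finset.sum_congr rfl fun i _ => ?_
          rw [Finset.sum_comm]
          refine Finset.sum_congr rfl fun j _ => ?_
          rw [Finset.sum_mul]
          exact Finset.sum_congr rfl fun a _ => by ring
      _ = ∑ i, ⟪y i, y i⟫ := by
          refine Finset.sum_congr rfl fun i _ => ?_
          rw [Finset.sum_eq_single i]
          · rw [hrow]; simp
          · intro j _ hj
            rw [hrow]; simp [Ne.symm hj]
          · simp
  -- eigenvalue bounds
  have hd0 : ∀ a, 0 ≤ d a := by
    intro a
    have h1 : ⟪z a, z a⟫ = d a := by rw [hz a a]; simp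
    rw [← h1]
    exact real_inner_self_nonneg
  have hd1 : ∀ a, d a ≤ 1 := by
    intro a
    have h1 : ⟪z a, z a⟫ = d a := by rw [hz a a]; simp
    have h2 : ‖z a‖ ^ 2 ≤ ∑ i, q a i ^ 2 := hcontr (fun i => q a i)
    have h3 : ∑ i, q a i ^ 2 = 1 := by
      have h4 : (⟪q a, q a⟫ : ℝ) = 1 := by
        have := orthonormal_iff_ite.mp q.orthonormal a a
        simpa using this
      rw [← h4, PiLp.inner_apply]
      simp only [RCLike.inner_apply, conj_trivial, sq, mul_comm]
    rw [← h1, real_inner_self_eq_norm_sq]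
    linarith
  have hsd : ∀ a, d a ≤ Real.sqrt (d a) := by
    intro a
    nlinarith [Real.sq_sqrt (hd0 a), Real.sqrt_nonneg (d a), hd1 a,
      Real.sqrt_le_one.mpr (hd1 a)]
  -- orthonormal extension
  let zF : Fin k → F' := fun a => ⟨z a, hzF a⟩
  let v0 : Fin k → F' := fun a => (Real.sqrt (d a))⁻¹ • zF a
  have hcard : Module.finrank ℝ F' = Fintype.card (Fin k) := by
    rw [Fintype.card_fin, ← hF]
    exact LinearEquiv.finrank_eq (LinearEquiv.ofSubmodules _ F' F
      (Submodule.map_comap_eq_of_surjective (WithLp.linearEquiv 2 ℝ (Fin n → ℝ)).surjective F))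
  have hv0 : Orthonormal ℝ (Set.restrict {a | d a ≠ 0} v0) := by
    rw [orthonormal_iff_ite]
    rintro ⟨a, ha⟩ ⟨c, hc⟩
    have hzz : (⟪v0 a, v0 c⟫ : ℝ)
        = (Real.sqrt (d a))⁻¹ * ((Real.sqrt (d c))⁻¹ * ⟪z a, z c⟫) := by
      simp only [v0, zF, Submodule.coe_inner, Submodule.coe_smul,
        real_inner_smul_left, real_inner_smul_right]
      ring
    simp only [Set.restrict_apply, Subtype.mk_eq_mk]
    change (⟪v0 a, v0 c⟫ : ℝ) = _
    rw [hzz, hz a c]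
    by_cases h : a = c
    · subst h
      simp only [if_pos rfl, if_true]
      have hda : 0 < d a := lt_of_le_of_ne (hd0 a) (Ne.symm ha)
      have hsq : Real.sqrt (d a) ≠ 0 := by positivity
      field_simp
      rw [Real.sq_sqrt (hd0 a)]
    · simp [h]
  obtain ⟨b, hb⟩ := Orthonormal.exists_orthonormalBasis_extension_of_card_eq hcard hv0
  have hbE : ∀ a c, (⟪(b a : EuclideanSpace ℝ (Fin n)), (b c : EuclideanSpace ℝ (Fin n))⟫ : ℝ)
      = if a = c then 1 else 0 := by
    intro a c
    rw [← Submodule.coe_inner]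
    exact orthonormal_iff_ite.mp b.orthonormal a c
  have hzb : ∀ a, (⟪z a, (b a : EuclideanSpace ℝ (Fin n))⟫ : ℝ) = Real.sqrt (d a) := by
    intro a
    by_cases ha : d a = 0
    · have hza : z a = 0 := by
        have h1 : (⟪z a, z a⟫ : ℝ) = 0 := by rw [hz a a]; simp [ha]
        exact inner_self_eq_zero.mp h1
      simp [hza, ha]
    · rw [hb a ha]
      have : (⟪z a, ((v0 a : F') : EuclideanSpace ℝ (Fin n))⟫ : ℝ)
          = (Real.sqrt (d a))⁻¹ * ⟪z a, z a⟫ := by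
        simp only [v0, zF, Submodule.coe_smul]
        rw [real_inner_smul_right]
      rw [this, hz a a, if_pos rfl]
      have hda : 0 < d a := lt_of_le_of_ne (hd0 a) (Ne.symm ha)
      have hsq : Real.sqrt (d a) ≠ 0 := by positivity
      rw [inv_mul_eq_div, div_eq_iff hsq]
      exact (Real.mul_self_sqrt (hd0 a)).symm
  -- the final orthonormal system
  let V : Fin k → EuclideanSpace ℝ (Fin n) := fun i => ∑ a, q a i • (b a : EuclideanSpace ℝ (Fin n))
  have hVF : ∀ i, V i ∈ F' := fun i =>
    Submodule.sum_mem _ fun a _ => Submodule.smul_mem _ _ (b a).2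
  have hV : ∀ i j, (⟪V i, V j⟫ : ℝ) = if i = j then 1 else 0 := by
    intro i j
    calc (⟪V i, V j⟫ : ℝ) = ∑ a, ∑ c, q a i * (q c j * ⟪(b a : EuclideanSpace ℝ (Fin n)), (b c : EuclideanSpace ℝ (Fin n))⟫) := by
          simp only [V, sum_inner, inner_sum, real_inner_smul_left, real_inner_smul_right]
          rw [Finset.sum_comm]
          exact Finset.sum_congr rfl fun a _ => Finset.sum_congr rfl fun c _ => by ring
      _ = ∑ a, q a i * q a j := by
          refine Finset.sum_congr rfl fun a _ => ?_
          rw [Finset.sum_eq_single a]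
          · rw [hbE]; simp
          · intro c _ hc
            rw [hbE]; simp [Ne.symm hc]
          · simp
      _ = if i = j then 1 else 0 := hrow i j
  -- the key inner product sum
  have hkey : ∑ i, (⟪y i, V i⟫ : ℝ) = ∑ a, Real.sqrt (d a) := by
    calc ∑ i, (⟪y i, V i⟫ : ℝ) = ∑ i, ∑ a, q a i * ⟪y i, (b a : EuclideanSpace ℝ (Fin n))⟫ := by
          refine Finset.sum_congr rfl fun i _ => ?_
          simp only [V, inner_sum, real_inner_smul_right]
      _ = ∑ a, (⟪z a, (b a : EuclideanSpace ℝ (Fin n))⟫ : ℝ) := by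
          rw [Finset.sum_comm]
          refine Finset.sum_congr rfl fun a _ => ?_
          simp only [z, sum_inner, real_inner_smul_left]
      _ = ∑ a, Real.sqrt (d a) := Finset.sum_congr rfl fun a _ => hzb a
  -- orthogonality transfer
  have hUV : ∀ i, (⟪U i, V i⟫ : ℝ) = ⟪y i, V i⟫ := by
    intro i
    have h0 : (⟪U i - y i, V i⟫ : ℝ) = 0 := by
      rw [real_inner_comm]
      exact (Submodule.sub_starProjection_mem_orthogonal (K := F') (U i)) _ (hVF i)
    rw [inner_sub_left] at h0; linarith
  -- final computation
  let V' : Fin k → (Fin n → ℝ) := fun i => (V i).ofLp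
  refine ⟨V', hVF, ?_, ?_⟩
  · intro i j
    exact (dotR_eq_inner (V i) (V j)).trans (hV i j)
  · have hsum : ∑ i, dotR (u i - V' i) (u i - V' i) = ∑ i, ‖U i - V i‖ ^ 2 :=
      Finset.sum_congr rfl fun i _ => dotR_self (U i) (V i)
    rw [hsum]
    have hterm : ∀ i, ‖U i - V i‖ ^ 2 = 2 - 2 * ⟪y i, V i⟫ := by
      intro i
      rw [norm_sub_sq_real]
      have h1 : ‖U i‖ ^ 2 = 1 := by
        rw [← real_inner_self_eq_norm_sq]; simpa using hu' i i
      have h2 : ‖V i‖ ^ 2 = 1 := by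
        rw [← real_inner_self_eq_norm_sq]
        simpa using hV i i
      rw [h1, h2, hUV i]
      ring
    calc ∑ i, ‖U i - V i‖ ^ 2 = ∑ i : Fin k, (2 - 2 * ⟪y i, V i⟫) :=
          Finset.sum_congr rfl fun i _ => hterm i
      _ = 2 * (k : ℝ) - 2 * ∑ i, (⟪y i, V i⟫ : ℝ) := by
          rw [Finset.sum_sub_distrib, ← Finset.mul_sum]
          simp [Finset.card_univ]
          ring
      _ ≤ 2 * (k : ℝ) - 2 * ∑ a, d a := by
          rw [hkey]
          have : ∑ a, d a ≤ ∑ a, Real.sqrt (d a) := Finset.sum_le_sum fun a _ => hsd a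
          linarith
      _ = 2 * ∑ i : Fin k, (1 - ⟪y i, y i⟫) := by
          rw [htr, Finset.sum_sub_distrib]
          simp [Finset.card_univ]
          ring
      _ = 2 * s ^ 2 := by rw [hs2]
end
end

section
/- Let G=(V,W) be a connected edge-weighted graph on n ≥ 3 vertices with Vol(V)=1, let 0 = λ_1 < λ_2 ≤ λ_3 ≤ ... ≤ λ_n be the eigenvalues of the normalized Laplacian L_D, and let u_2 be a unit-norm eigenvector belonging to λ_2. Suppose λ_2 = 1 − θ and λ_3 ≥ 1 − ε with 0 ≤ ε < θ < 1. Then the weighted 2-variance of the coordinates of D^{-1/2}u_2 satisfies S_2²(D^{-1/2}u_2) ≤ (1−θ)/(1−ε). -/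
open Finset Matrix

noncomputable section

lemma aux_complete {n : ℕ} {u : Fin n → Fin n → ℝ} (h : IsOrthonormalSys u)
    (a b : Fin n) : (∑ i, u i a * u i b) = if a = b then (1:ℝ) else 0 := by
  classical
  have h1 : (Matrix.of u) * (Matrix.of u)ᵀ = 1 := by
    ext i j
    simpa [Matrix.mul_apply, dotR, Matrix.one_apply] using h i j
  have h2 : (Matrix.of u)ᵀ * (Matrix.of u) = 1 := mul_eq_one_comm.mp h1
  have h3 := congrFun (congrFun h2 a) b
  simpa [Matrix.mul_apply, Matrix.one_apply, mul_comm] using h3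

lemma aux_expand {n : ℕ} {u : Fin n → Fin n → ℝ} (h : IsOrthonormalSys u)
    (y : Fin n → ℝ) (b : Fin n) :
    ∑ i, dotR y (u i) * u i b = y b := by
  simp only [dotR, Finset.sum_mul]
  rw [Finset.sum_comm]
  have hrow : ∀ a, ∑ i, y a * u i a * u i b = y a * (if a = b then (1:ℝ) else 0) := by
    intro a
    rw [← aux_complete h a b, Finset.mul_sum]
    exact Finset.sum_congr rfl fun i _ => by ring
  rw [Finset.sum_congr rfl fun a _ => hrow a]
  simp [mul_ite]

lemma aux_parseval {n : ℕ} {u : Fin n → Fin n → ℝ} (h : IsOrthonormalSys u)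
    (y : Fin n → ℝ) :
    ∑ i, (dotR y (u i))^2 = dotR y y := by
  have h1 : ∀ i, (dotR y (u i))^2 = ∑ b, y b * (dotR y (u i) * u i b) := by
    intro i
    have h2 : ∑ b, y b * (dotR y (u i) * u i b) = dotR y (u i) * ∑ b, y b * u i b := by
      rw [Finset.mul_sum]; exact Finset.sum_congr rfl fun b _ => by ring
    rw [h2]
    simp only [dotR]
    ring
  rw [Finset.sum_congr rfl fun i _ => h1 i, Finset.sum_comm]
  simp only [dotR]
  refine Finset.sum_congr rfl fun b _ => ?_
  rw [← Finset.mul_sum]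
  congr 1
  have := aux_expand h y b
  simpa [dotR] using this

lemma aux_quadform {n : ℕ} {u : Fin n → Fin n → ℝ} (h : IsOrthonormalSys u)
    (M : Matrix (Fin n) (Fin n) ℝ) (lam : Fin n → ℝ)
    (hMu : ∀ i, M *ᵥ u i = fun j => (1 - lam i) * u i j) (y : Fin n → ℝ) :
    dotR y (M *ᵥ y) = ∑ i, (1 - lam i) * (dotR y (u i))^2 := by
  have hMua : ∀ i a, ∑ k, M a k * u i k = (1 - lam i) * u i a := by
    intro i a
    have := congrFun (hMu i) a
    simpa [Matrix.mulVec, dotProduct] using this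
  have hstep : ∀ i, (1 - lam i) * (dotR y (u i))^2
      = ∑ a, y a * ∑ k, M a k * (dotR y (u i) * u i k) := by
    intro i
    have h3 : ∀ a, ∑ k, M a k * (dotR y (u i) * u i k)
        = dotR y (u i) * ((1 - lam i) * u i a) := by
      intro a
      have h4 : ∑ k, M a k * (dotR y (u i) * u i k)
          = dotR y (u i) * ∑ k, M a k * u i k := by
        rw [Finset.mul_sum]; exact Finset.sum_congr rfl fun k _ => by ring
      rw [h4, hMua i a]
    rw [Finset.sum_congr rfl fun a _ => by rw [h3 a]]
    have h5 : ∑ a, y a * (dotR y (u i) * ((1 - lam i) * u i a))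
        = (dotR y (u i) * (1 - lam i)) * ∑ a, y a * u i a := by
      rw [Finset.mul_sum]; exact Finset.sum_congr rfl fun a _ => by ring
    rw [h5]
    simp only [dotR]
    ring
  rw [Finset.sum_congr rfl fun i _ => hstep i, Finset.sum_comm]
  simp only [dotR, Matrix.mulVec, dotProduct]
  refine Finset.sum_congr rfl fun a _ => ?_
  rw [← Finset.mul_sum]
  congr 1
  rw [Finset.sum_comm]
  refine Finset.sum_congr rfl fun k _ => ?_
  rw [← Finset.mul_sum]
  have := aux_expand h y k
  simp only [dotR] at this
  rw [this]

set_option maxHeartbeats 4000000 in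
/-- if `λ₂ = 1 - θ` and `λ₃ ≥ 1 - ε` with `0 ≤ ε < θ < 1`, then
`S_2²(D^{-1/2} u₂) ≤ (1-θ)/(1-ε)`. -/
theorem statement19 {n : ℕ} (hn : 3 ≤ n) (W : Matrix (Fin n) (Fin n) ℝ)
    (hsym : W.IsSymm) (hnn : ∀ i j, 0 ≤ W i j) (hdiag : ∀ i, W i i = 0)
    (hd : ∀ i, 0 < gdeg W i) (hvol : gvol W Finset.univ = 1) (hconn : gConnected W)
    (lam : Fin n → ℝ) (u : Fin n → Fin n → ℝ) (θ ε : ℝ)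
    (hmono : Monotone lam)
    (hortho : IsOrthonormalSys u)
    (heig : ∀ i, normLap W *ᵥ u i = lam i • u i)
    (h0 : lam ⟨0, by omega⟩ = 0)
    (hpos : 0 < lam ⟨1, by omega⟩)
    (hθ : lam ⟨1, by omega⟩ = 1 - θ)
    (hε : 1 - ε ≤ lam ⟨2, by omega⟩)
    (hε0 : 0 ≤ ε) (hεθ : ε < θ) (hθ1 : θ < 1) :
    S2var (gdeg W) (fun j => u ⟨1, by omega⟩ j / Real.sqrt (gdeg W j))
      ≤ (1 - θ) / (1 - ε) := by
  classical
  set i0 : Fin n := ⟨0, by omega⟩ with hi0_def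
  set i1 : Fin n := ⟨1, by omega⟩ with hi1_def
  set i2 : Fin n := ⟨2, by omega⟩ with hi2_def
  set d : Fin n → ℝ := gdeg W with hd_def
  set sd : Fin n → ℝ := fun j => Real.sqrt (gdeg W j) with hsd_def
  set M : Matrix (Fin n) (Fin n) ℝ := normAdj W with hM_def
  set x : Fin n → ℝ := fun j => u i1 j / sd j with hx_def
  -- basic positivity
  have hsd0 : ∀ j, 0 < sd j := fun j => Real.sqrt_pos.mpr (hd j)
  have hsdne : ∀ j, sd j ≠ 0 := fun j => ne_of_gt (hsd0 j)
  have hsdsq : ∀ j, sd j * sd j = d j := fun j => Real.mul_self_sqrt (hd j).le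
  have hsum_d : ∑ j, d j = 1 := hvol
  have hε1 : (0:ℝ) < 1 - ε := by linarith
  -- matrix entries
  have hMent : ∀ a b, M a b = W a b / (sd a * sd b) := fun a b => rfl
  have hMnn : ∀ a b, 0 ≤ M a b := fun a b =>
    div_nonneg (hnn a b) (mul_nonneg (hsd0 a).le (hsd0 b).le)
  -- M *ᵥ sd = sd
  have hMsd : M *ᵥ sd = sd := by
    funext j
    have : ∀ k, M j k * sd k = W j k / sd j := by
      intro k
      rw [hMent, div_mul_eq_mul_div, mul_div_mul_right _ _ (hsdne k)]
    simp only [Matrix.mulVec, dotProduct]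
    rw [Finset.sum_congr rfl fun k _ => this k, ← Finset.sum_div]
    have : ∑ k, W j k = d j := rfl
    rw [this, ← hsdsq j, mul_div_assoc, div_self (hsdne j), mul_one]
  -- column sums
  have hcol : ∀ b, ∑ a, sd a * M a b = sd b := by
    intro b
    have h1 : ∀ a, sd a * M a b = W a b / sd b := by
      intro a
      rw [hMent, mul_div_assoc']
      rw [mul_div_mul_left _ _ (hsdne a)]
    rw [Finset.sum_congr rfl fun a _ => h1 a, ← Finset.sum_div]
    have h2 : ∑ a, W a b = d b := by
      rw [Finset.sum_congr rfl fun a _ => (hsym.apply a b).symm]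
      rfl
    rw [h2, ← hsdsq b, mul_div_assoc, div_self (hsdne b), mul_one]
  -- eigen equation for M
  have hMu : ∀ i, M *ᵥ u i = fun j => (1 - lam i) * u i j := by
    intro i
    funext j
    have h1 : normLap W *ᵥ u i = u i - M *ᵥ u i := by
      rw [normLap, Matrix.sub_mulVec, Matrix.one_mulVec]
    have h2 := heig i
    rw [h1] at h2
    have h3 := congrFun h2 j
    simp only [Pi.sub_apply, Pi.smul_apply, smul_eq_mul] at h3
    have : (M *ᵥ u i) j = u i j - lam i * u i j := by linarith
    rw [this]; ring
  -- orthogonality of sd to u i, i ≠ i0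
  have he : ∀ i, i ≠ i0 → dotR sd (u i) = 0 := by
    intro i hi
    have hlam : 0 < lam i := by
      have h1 : i1 ≤ i := by
        rw [Fin.le_def]
        have : i.val ≠ 0 := fun hc => hi (Fin.ext hc)
        simp only [hi1_def]
        omega
      exact lt_of_lt_of_le hpos (hmono h1)
    have h1 : dotR sd (M *ᵥ u i) = dotR sd (u i) := by
      simp only [dotR, Matrix.mulVec, dotProduct]
      have h2 : ∀ a, sd a * ∑ k, M a k * u i k = ∑ k, sd a * M a k * u i k := by
        intro a; rw [Finset.mul_sum]; exact Finset.sum_congr rfl fun k _ => by ring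
      rw [Finset.sum_congr rfl fun a _ => h2 a, Finset.sum_comm]
      refine Finset.sum_congr rfl fun k _ => ?_
      have h3 : ∑ a, sd a * M a k * u i k = (∑ a, sd a * M a k) * u i k :=
        (Finset.sum_mul _ _ _).symm
      rw [h3, hcol k, mul_comm]
    have h2 : dotR sd (M *ᵥ u i) = (1 - lam i) * dotR sd (u i) := by
      rw [hMu i]
      simp only [dotR]
      rw [Finset.mul_sum]
      exact Finset.sum_congr rfl fun a _ => by ring
    have h3 : lam i * dotR sd (u i) = 0 := by
      rw [h2] at h1; linarith [h1]
    rcases mul_eq_zero.mp h3 with hc | hc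
    · exact absurd hc (ne_of_gt hlam)
    · exact hc
  -- norm of sd
  have hsd_norm : dotR sd sd = 1 := by
    simp only [dotR]
    rw [Finset.sum_congr rfl fun j _ => hsdsq j]
    exact hsum_d
  set e0 : ℝ := dotR sd (u i0) with he0_def
  have he0sq : e0 ^ 2 = 1 := by
    have h1 := aux_parseval hortho sd
    rw [hsd_norm] at h1
    rw [← h1]
    symm
    rw [Finset.sum_eq_single i0]
    · intro b _ hb
      rw [he b hb]; ring
    · intro hb; exact absurd (Finset.mem_univ i0) hb
  have hsd_eq : ∀ j, sd j = e0 * u i0 j := by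
    have hzero : ∑ j, (sd j - e0 * u i0 j)^2 = 0 := by
      have hexp : ∑ j, (sd j - e0 * u i0 j)^2
          = dotR sd sd - 2 * e0 * dotR sd (u i0) + e0^2 * dotR (u i0) (u i0) := by
        simp only [dotR]
        rw [Finset.mul_sum, Finset.mul_sum, ← Finset.sum_sub_distrib, ← Finset.sum_add_distrib]
        exact Finset.sum_congr rfl fun j _ => by ring
      rw [hexp, hsd_norm, ← he0_def]
      have h1 : dotR (u i0) (u i0) = 1 := by
        have := hortho i0 i0; simpa using this
      rw [h1]
      nlinarith [he0sq]
    intro j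
    have h1 : (sd j - e0 * u i0 j)^2 = 0 := by
      have := Finset.sum_eq_zero_iff_of_nonneg (s := (Finset.univ : Finset (Fin n))) (f := fun i => (sd i - e0 * u i0 i)^2) (fun i _ => sq_nonneg (sd i - e0 * u i0 i))
      exact this.mp hzero j (Finset.mem_univ j)
    have := pow_eq_zero_iff (n := 2) (by norm_num) |>.mp h1
    linarith [this]
  have hc0sq : ∀ y : Fin n → ℝ, (dotR y sd)^2 = (dotR y (u i0))^2 := by
    intro y
    have h1 : dotR y sd = e0 * dotR y (u i0) := by
      simp only [dotR]
      rw [Finset.mul_sum]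
      exact Finset.sum_congr rfl fun j _ => by rw [hsd_eq j]; ring
    rw [h1, mul_pow, he0sq, one_mul]
  -- the key spectral inequality
  have key : ∀ y : Fin n → ℝ, dotR y (M *ᵥ y) ≤
      (dotR y sd)^2 + θ * (dotR y (u i1))^2
        + ε * (dotR y y - (dotR y sd)^2 - (dotR y (u i1))^2) := by
    intro y
    have hq := aux_quadform hortho M lam hMu y
    have hpar := aux_parseval hortho y
    have h10 : i1 ≠ i0 := by
      rw [hi1_def, hi0_def]; intro hc
      have := congrArg Fin.val hc
      simp at this
    have h0mem : i0 ∈ (Finset.univ : Finset (Fin n)) := Finset.mem_univ _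
    have h1mem : i1 ∈ Finset.univ.erase i0 := Finset.mem_erase.mpr ⟨h10, Finset.mem_univ _⟩
    rw [← Finset.sum_erase_add Finset.univ _ h0mem,
        ← Finset.sum_erase_add (Finset.univ.erase i0) _ h1mem] at hq hpar
    have hbound : ∑ i ∈ (Finset.univ.erase i0).erase i1, (1 - lam i) * (dotR y (u i))^2
        ≤ ε * ∑ i ∈ (Finset.univ.erase i0).erase i1, (dotR y (u i))^2 := by
      rw [Finset.mul_sum]
      refine Finset.sum_le_sum fun i hi => ?_
      have hiv : 2 ≤ i.val := by
        have h1 := (Finset.mem_erase.mp hi).1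
        have h2 := (Finset.mem_erase.mp (Finset.mem_erase.mp hi).2).1
        have hv1 : i.val ≠ 1 := fun hc => h1 (by rw [hi1_def]; exact Fin.ext hc)
        have hv0 : i.val ≠ 0 := fun hc => h2 (by rw [hi0_def]; exact Fin.ext hc)
        omega
      have hle : lam i2 ≤ lam i := hmono (by rw [Fin.le_def, hi2_def]; exact hiv)
      have h3 : 1 - lam i ≤ ε := by linarith
      exact mul_le_mul_of_nonneg_right h3 (sq_nonneg _)
    have e0' : 1 - lam i0 = 1 := by rw [h0]; ring
    have e1' : 1 - lam i1 = θ := by rw [hθ]; ring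
    rw [e0', e1'] at hq
    rw [hq, hc0sq y]
    rw [← hpar]
    linarith [hbound]
  -- facts about x
  have hux : ∀ j, u i1 j = x j * sd j := by
    intro j
    rw [hx_def]
    rw [div_mul_cancel₀ _ (hsdne j)]
  have hu1_norm : dotR (u i1) (u i1) = 1 := by
    have := hortho i1 i1; simpa using this
  have he1 : dotR sd (u i1) = 0 := by
    apply he
    rw [hi1_def, hi0_def]
    intro hc
    have := congrArg Fin.val hc
    simp at this
  have hsum_sdu : ∑ j, sd j * u i1 j = 0 := he1
  have hsum_u2 : ∑ j, u i1 j * u i1 j = 1 := hu1_norm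
  -- the threshold function Q
  set Q : ℝ → ℝ := fun t => ∑ j, u i1 j * max (u i1 j - t * sd j) 0 with hQ_def
  have hQcont : Continuous Q := by
    apply continuous_finset_sum
    intro j _
    exact continuous_const.mul
      ((continuous_const.sub (continuous_id.mul continuous_const)).max continuous_const)
  have hFinNe : (Finset.univ : Finset (Fin n)).Nonempty := ⟨i0, Finset.mem_univ _⟩
  set B : ℝ := Finset.univ.sup' hFinNe fun j => |x j| with hB_def
  have hB : ∀ j, |x j| ≤ B := fun j =>
    Finset.le_sup' (fun j => |x j|) (Finset.mem_univ j)
  have hB0 : 0 ≤ B := le_trans (abs_nonneg _) (hB i0)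
  have hab : -(B+1) ≤ B+1 := by linarith
  have hQa : Q (-(B+1)) = 1 := by
    have hterm : ∀ j, max (u i1 j - (-(B+1)) * sd j) 0 = u i1 j - (-(B+1)) * sd j := by
      intro j
      apply max_eq_left
      have h1 : -B ≤ x j := neg_le_of_abs_le (hB j)
      have h2 : u i1 j - (-(B+1)) * sd j = (x j + (B+1)) * sd j := by
        rw [hux j]; ring
      rw [h2]
      apply mul_nonneg _ (hsd0 j).le
      linarith
    rw [hQ_def]
    simp only []
    rw [Finset.sum_congr rfl fun j _ => by rw [hterm j]]
    have : ∑ j, u i1 j * (u i1 j - (-(B+1)) * sd j)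
        = (∑ j, u i1 j * u i1 j) + (B+1) * ∑ j, sd j * u i1 j := by
      rw [Finset.mul_sum, ← Finset.sum_add_distrib]
      exact Finset.sum_congr rfl fun j _ => by ring
    rw [this, hsum_u2, hsum_sdu]
    ring
  have hQb : Q (B+1) = 0 := by
    have hterm : ∀ j, max (u i1 j - (B+1) * sd j) 0 = 0 := by
      intro j
      apply max_eq_right
      have h1 : x j ≤ B := le_of_abs_le (hB j)
      have h2 : u i1 j - (B+1) * sd j = (x j - (B+1)) * sd j := by
        rw [hux j]; ring
      rw [h2]
      apply mul_nonpos_of_nonpos_of_nonneg _ (hsd0 j).le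
      linarith
    rw [hQ_def]
    simp only []
    rw [Finset.sum_congr rfl fun j _ => by rw [hterm j]]
    simp
  obtain ⟨m, hmIcc, hQm⟩ : ∃ m ∈ Set.Icc (-(B+1)) (B+1), Q m = 1/2 := by
    have hsub := intermediate_value_Icc' hab hQcont.continuousOn
    have hmem : (1/2 : ℝ) ∈ Set.Icc (Q (B+1)) (Q (-(B+1))) := by
      rw [hQa, hQb]; norm_num
    obtain ⟨m, hm1, hm2⟩ := hsub hmem
    exact ⟨m, hm1, hm2⟩
  -- the shifted vector and its positive/negative parts
  set zz : Fin n → ℝ := fun j => u i1 j - m * sd j with hzz_def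
  set f : Fin n → ℝ := fun j => max (zz j) 0 with hf_def
  set g : Fin n → ℝ := fun j => max (-zz j) 0 with hg_def
  have hf0 : ∀ j, 0 ≤ f j := fun j => le_max_right _ _
  have hg0 : ∀ j, 0 ≤ g j := fun j => le_max_right _ _
  have hfg : ∀ j, f j - g j = zz j := by
    intro j
    simp only [hf_def, hg_def]
    rcases le_total (zz j) 0 with h | h
    · rw [max_eq_right h, max_eq_left (by linarith : (0:ℝ) ≤ -zz j)]; ring
    · rw [max_eq_left h, max_eq_right (by linarith : -zz j ≤ 0)]; ring
  have hfgmul : ∀ j, f j * g j = 0 := by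
    intro j
    simp only [hf_def, hg_def]
    rcases le_total (zz j) 0 with h | h
    · rw [max_eq_right h]; ring
    · rw [max_eq_right (by linarith : -zz j ≤ 0)]; ring
  set U : Finset (Fin n) := Finset.univ.filter (fun j => 0 < zz j) with hU_def
  have hUmem : ∀ j, j ∈ U ↔ 0 < zz j := by
    intro j; rw [hU_def, Finset.mem_filter]; simp
  have hUcmem : ∀ j, j ∈ Uᶜ ↔ zz j ≤ 0 := by
    intro j; rw [Finset.mem_compl, hUmem j]; constructor
    · intro h; linarith [not_lt.mp h]
    · intro h; exact not_lt.mpr h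
  have hUf : ∀ j ∈ U, f j = zz j := fun j hj => max_eq_left (le_of_lt ((hUmem j).mp hj))
  have hUg : ∀ j ∈ U, g j = 0 := fun j hj =>
    max_eq_right (by linarith [(hUmem j).mp hj] : -zz j ≤ 0)
  have hUcf : ∀ j ∈ Uᶜ, f j = 0 := fun j hj => max_eq_right ((hUcmem j).mp hj)
  have hUcg : ∀ j ∈ Uᶜ, g j = -zz j := fun j hj =>
    max_eq_left (by linarith [(hUcmem j).mp hj] : (0:ℝ) ≤ -zz j)
  have hQmf : (∑ j, u i1 j * f j) = 1/2 := hQm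
  -- nonemptiness of the two parts
  have hUne : U.Nonempty := by
    rw [Finset.nonempty_iff_ne_empty]
    intro hc
    have hfall : ∀ j, f j = 0 := by
      intro j
      apply hUcf
      rw [Finset.mem_compl, hc]
      exact Finset.notMem_empty _
    have : (1:ℝ)/2 = 0 := by
      rw [← hQmf]
      exact Finset.sum_eq_zero fun j _ => by rw [hfall j, mul_zero]
    norm_num at this
  have hUcne : Uᶜ.Nonempty := by
    rw [Finset.nonempty_iff_ne_empty]
    intro hc
    have hallU : ∀ j, j ∈ U := by
      intro j
      by_contra hj
      have : j ∈ Uᶜ := Finset.mem_compl.mpr hj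
      rw [hc] at this
      exact Finset.notMem_empty _ this
    have h1 : ∑ j, u i1 j * f j = ∑ j, u i1 j * zz j :=
      Finset.sum_congr rfl fun j _ => by rw [hUf j (hallU j)]
    have h2 : ∑ j, u i1 j * zz j
        = (∑ j, u i1 j * u i1 j) - m * ∑ j, sd j * u i1 j := by
      rw [Finset.mul_sum, ← Finset.sum_sub_distrib]
      refine Finset.sum_congr rfl fun j _ => ?_
      rw [hzz_def]; ring
    have : (1:ℝ)/2 = 1 := by
      rw [← hQmf, h1, h2, hsum_u2, hsum_sdu]; ring
    norm_num at this
  -- volumes and sums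
  set v : ℝ := ∑ j ∈ U, d j with hv_def
  set C : ℝ := ∑ j ∈ U, sd j * u i1 j with hC_def
  have hv0 : 0 < v := Finset.sum_pos (fun j _ => hd j) hUne
  have hvc : ∑ j ∈ Uᶜ, d j = 1 - v := by
    have := Finset.sum_add_sum_compl U d
    rw [hsum_d] at this
    linarith
  have h1v : 0 < 1 - v := by
    rw [← hvc]
    exact Finset.sum_pos (fun j _ => hd j) hUcne
  have hCc : ∑ j ∈ Uᶜ, sd j * u i1 j = -C := by
    have := Finset.sum_add_sum_compl U (fun j => sd j * u i1 j)
    rw [hsum_sdu] at this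
    linarith
  -- p and p'
  set p : ℝ := dotR f sd with hp_def
  set p' : ℝ := dotR g sd with hp'_def
  have hp : p = C - m * v := by
    rw [hp_def]
    simp only [dotR]
    rw [← Finset.sum_add_sum_compl U (fun j => f j * sd j)]
    have h1 : ∑ j ∈ Uᶜ, f j * sd j = 0 :=
      Finset.sum_eq_zero fun j hj => by rw [hUcf j hj, zero_mul]
    have h2 : ∑ j ∈ U, f j * sd j = C - m * v := by
      rw [hv_def, hC_def, Finset.mul_sum, ← Finset.sum_sub_distrib]
      refine Finset.sum_congr rfl fun j hj => ?_
      rw [hUf j hj, hzz_def]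
      simp only []
      rw [← hsdsq j]
      ring
    rw [h1, h2]
    ring
  have hp' : p' = C + m * (1 - v) := by
    rw [hp'_def]
    simp only [dotR]
    rw [← Finset.sum_add_sum_compl U (fun j => g j * sd j)]
    have h1 : ∑ j ∈ U, g j * sd j = 0 :=
      Finset.sum_eq_zero fun j hj => by rw [hUg j hj, zero_mul]
    have h2 : ∑ j ∈ Uᶜ, g j * sd j
        = m * (∑ j ∈ Uᶜ, d j) - ∑ j ∈ Uᶜ, sd j * u i1 j := by
      rw [Finset.mul_sum, ← Finset.sum_sub_distrib]
      refine Finset.sum_congr rfl fun j hj => ?_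
      rw [hUcg j hj, hzz_def]
      simp only []
      rw [← hsdsq j]
      ring
    rw [h1, h2, hvc, hCc]
    ring
  -- norms
  set Nf : ℝ := dotR f f with hNf_def
  set Ng : ℝ := dotR g g with hNg_def
  have hNfNg : Nf + Ng = 1 + m^2 := by
    have h1 : Nf + Ng = ∑ j, zz j^2 := by
      rw [hNf_def, hNg_def]
      simp only [dotR]
      rw [← Finset.sum_add_distrib]
      refine Finset.sum_congr rfl fun j _ => ?_
      have h3 : zz j^2 = f j * f j + g j * g j - 2*(f j * g j) := by
        rw [← hfg j]; ring
      rw [h3, hfgmul j]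
      ring
    have h2 : ∑ j, zz j^2
        = (∑ j, u i1 j * u i1 j) - 2*m*(∑ j, sd j * u i1 j) + m^2 * (∑ j, d j) := by
      rw [Finset.mul_sum, Finset.mul_sum, ← Finset.sum_sub_distrib, ← Finset.sum_add_distrib]
      refine Finset.sum_congr rfl fun j _ => ?_
      rw [hzz_def]
      simp only []
      rw [← hsdsq j]
      ring
    rw [h1, h2, hsum_u2, hsum_sdu, hsum_d]
    ring
  -- inner products with u i1
  have hQf : dotR f (u i1) = 1/2 := by
    rw [← hQmf]
    simp only [dotR]
    exact Finset.sum_congr rfl fun j _ => mul_comm _ _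
  have hQg : dotR g (u i1) = -(1/2) := by
    have h1 : dotR f (u i1) - dotR g (u i1) = 1 := by
      simp only [dotR]
      rw [← Finset.sum_sub_distrib]
      have h2 : ∀ j, f j * u i1 j - g j * u i1 j
          = u i1 j * u i1 j - m * (sd j * u i1 j) := by
        intro j
        have h3 : f j * u i1 j - g j * u i1 j = (f j - g j) * u i1 j := by ring
        rw [h3, hfg j, hzz_def]
        ring
      rw [Finset.sum_congr rfl fun j _ => h2 j]
      rw [Finset.sum_sub_distrib, ← Finset.mul_sum, hsum_u2, hsum_sdu]
      ring
    rw [hQf] at h1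
    linarith
  -- inner products with zz
  have hfz : dotR f zz = Nf := by
    rw [hNf_def]
    simp only [dotR]
    refine Finset.sum_congr rfl fun j _ => ?_
    have h1 : f j * zz j = f j * f j - f j * g j := by
      rw [← hfg j]; ring
    rw [h1, hfgmul j]
    ring
  have hgz : dotR g zz = -Ng := by
    have h1 : dotR g zz = -(dotR g g) := by
      simp only [dotR]
      rw [← Finset.sum_neg_distrib]
      refine Finset.sum_congr rfl fun j _ => ?_
      have h2 : g j * zz j = g j * f j - g j * g j := by
        rw [← hfg j]; ring
      have h3 : g j * f j = 0 := by rw [mul_comm]; exact hfgmul j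
      rw [h2, h3]
      ring
    rw [h1, hNg_def]
  -- nonnegative cross terms
  have hγf : 0 ≤ dotR f (M *ᵥ g) := by
    simp only [dotR, Matrix.mulVec, dotProduct]
    exact Finset.sum_nonneg fun j _ => mul_nonneg (hf0 j)
      (Finset.sum_nonneg fun k _ => mul_nonneg (hMnn j k) (hg0 k))
  have hγg : 0 ≤ dotR g (M *ᵥ f) := by
    simp only [dotR, Matrix.mulVec, dotProduct]
    exact Finset.sum_nonneg fun j _ => mul_nonneg (hg0 j)
      (Finset.sum_nonneg fun k _ => mul_nonneg (hMnn j k) (hf0 k))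
  -- quadratic form identities
  have hMf_entry : ∀ jj, (M *ᵥ f) jj
      = θ * zz jj - (m*(1-θ)) * sd jj + (M *ᵥ g) jj := by
    intro jj
    have h1 : (M *ᵥ f) jj - (M *ᵥ g) jj = (M *ᵥ u i1) jj - m * (M *ᵥ sd) jj := by
      simp only [Matrix.mulVec, dotProduct]
      rw [Finset.mul_sum, ← Finset.sum_sub_distrib, ← Finset.sum_sub_distrib]
      refine Finset.sum_congr rfl fun k _ => ?_
      have h2 : M jj k * f k - M jj k * g k = M jj k * (f k - g k) := by ring
      rw [h2, hfg k, hzz_def]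
      ring
    have h2 : (M *ᵥ u i1) jj = θ * u i1 jj := by
      rw [hMu i1]
      simp only []
      rw [hθ]
      ring
    have h3 : (M *ᵥ sd) jj = sd jj := congrFun hMsd jj
    have h4 : θ * zz jj - (m*(1-θ)) * sd jj = θ * u i1 jj - m * sd jj := by
      rw [hzz_def]
      simp only []
      ring
    rw [h2, h3] at h1
    linarith
  have hfMf : dotR f (M *ᵥ f)
      = θ * Nf - (m*(1-θ)) * p + dotR f (M *ᵥ g) := by
    have h1 : dotR f (M *ᵥ f)
        = ∑ jj, (θ*(f jj * zz jj) - (m*(1-θ))*(f jj * sd jj) + f jj * (M *ᵥ g) jj) := by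
      simp only [dotR]
      refine Finset.sum_congr rfl fun jj _ => ?_
      rw [hMf_entry jj]
      ring
    rw [h1, Finset.sum_add_distrib, Finset.sum_sub_distrib, ← Finset.mul_sum, ← Finset.mul_sum]
    have h2 : ∑ jj, f jj * zz jj = Nf := hfz
    have h3 : ∑ jj, f jj * sd jj = p := by rw [hp_def]; rfl
    have h4 : ∑ jj, f jj * (M *ᵥ g) jj = dotR f (M *ᵥ g) := rfl
    rw [h2, h3, h4]
  have hgMg : dotR g (M *ᵥ g)
      = θ * Ng + (m*(1-θ)) * p' + dotR g (M *ᵥ f) := by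
    have h1 : dotR g (M *ᵥ g)
        = ∑ jj, (g jj * (M *ᵥ f) jj - θ*(g jj * zz jj) + (m*(1-θ))*(g jj * sd jj)) := by
      simp only [dotR]
      refine Finset.sum_congr rfl fun jj _ => ?_
      rw [hMf_entry jj]
      ring
    rw [h1, Finset.sum_add_distrib, Finset.sum_sub_distrib, ← Finset.mul_sum, ← Finset.mul_sum]
    have h2 : ∑ jj, g jj * zz jj = -Ng := hgz
    have h3 : ∑ jj, g jj * sd jj = p' := by rw [hp'_def]; rfl
    have h4 : ∑ jj, g jj * (M *ᵥ f) jj = dotR g (M *ᵥ f) := rfl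
    rw [h2, h3, h4]
    ring
  -- apply the spectral inequality
  have kf := key f
  rw [hfMf, ← hp_def, ← hNf_def, hQf] at kf
  have kg := key g
  rw [hgMg, ← hp'_def, ← hNg_def, hQg] at kg
  -- the main algebra
  have hm2 : p' - p = m := by rw [hp, hp']; ring
  have hθN : θ*Nf + θ*Ng = θ + θ*m^2 := by linear_combination θ * hNfNg
  have hεN : ε*Nf + ε*Ng = ε + ε*m^2 := by linear_combination ε * hNfNg
  have hmp : (m*(1-θ))*p' - (m*(1-θ))*p = (1-θ)*m^2 := by
    linear_combination (m*(1-θ)) * hm2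
  have h2pp : p^2 + p'^2 - m^2 = 2*(p*p') := by
    linear_combination (p' - p + m) * hm2
  have h2ppε : ε*(p^2) + ε*(p'^2) - ε*(m^2) = 2*(ε*(p*p')) := by
    linear_combination ε * h2pp
  have h4 : θ - ε ≤ 4*((1-ε)*(p*p')) := by
    linarith only [kf, kg, hγf, hγg, hθN, hεN, hmp, h2pp, h2ppε]
  have hCid : (1-v)*p + v*p' = C := by rw [hp, hp']; ring
  have hCsq : C^2 = ((1-v)*p + v*p')^2 := by rw [hCid]
  have hAM : 4*(v*(1-v))*(p*p') ≤ C^2 := by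
    rw [hCsq]
    linarith only [sq_nonneg ((1-v)*p - v*p')]
  have hvv : 0 ≤ v*(1-v) := mul_nonneg hv0.le h1v.le
  have hC2 : (θ-ε)*(v*(1-v)) ≤ (1-ε)*C^2 := by
    have s1 := mul_le_mul_of_nonneg_right h4 hvv
    have s2 := mul_le_mul_of_nonneg_left hAM hε1.le
    calc (θ-ε)*(v*(1-v)) ≤ (4*((1-ε)*(p*p')))*(v*(1-v)) := s1
      _ = (1-ε)*(4*(v*(1-v))*(p*p')) := by ring
      _ ≤ (1-ε)*C^2 := s2
  -- the partition
  set P : Fin n → Fin 2 := fun j => if 0 < zz j then 0 else 1 with hP_def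
  have hP0 : partSet P 0 = U := by
    ext j
    rw [partSet, Finset.mem_filter, hP_def]
    simp only [Finset.mem_univ, true_and]
    rw [hUmem j]
    constructor
    · intro h
      by_contra hc
      rw [if_neg hc] at h
      exact absurd h (by decide)
    · intro h
      rw [if_pos h]
  have hP1 : partSet P 1 = Uᶜ := by
    ext j
    rw [partSet, Finset.mem_filter, hP_def]
    simp only [Finset.mem_univ, true_and]
    rw [hUcmem j]
    constructor
    · intro h
      by_contra hc
      rw [if_pos (by linarith [lt_of_not_ge hc] : 0 < zz j)] at h
      exact absurd h (by decide)
    · intro h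
      rw [if_neg (by linarith : ¬ 0 < zz j)]
  have hsurj : Function.Surjective P := by
    intro b
    fin_cases b
    · obtain ⟨j, hj⟩ := hUne
      refine ⟨j, ?_⟩
      rw [hP_def]
      simp only []
      rw [if_pos ((hUmem j).mp hj)]
      rfl
    · obtain ⟨j, hj⟩ := hUcne
      refine ⟨j, ?_⟩
      rw [hP_def]
      simp only []
      rw [if_neg (by linarith [(hUcmem j).mp hj] : ¬ 0 < zz j)]
      rfl
  -- sums with x
  have hdx : ∀ j, d j * x j = sd j * u i1 j := by
    intro j
    rw [hx_def]
    simp only []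
    rw [← hsdsq j]
    field_simp [hsdne j]
  have hdx2 : ∀ j, d j * x j^2 = u i1 j * u i1 j := by
    intro j
    rw [hx_def]
    simp only []
    rw [← hsdsq j]
    field_simp [hsdne j]
  have hsum_dx2 : ∑ j, d j * x j^2 = 1 := by
    rw [Finset.sum_congr rfl fun j _ => hdx2 j]
    exact hsum_u2
  have hCU : ∑ j ∈ U, d j * x j = C := by
    rw [Finset.sum_congr rfl fun j _ => hdx j, ← hC_def]
  have hCUc : ∑ j ∈ Uᶜ, d j * x j = -C := by
    rw [Finset.sum_congr rfl fun j _ => hdx j]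
    exact hCc
  have hexpand : ∀ (s : Finset (Fin n)) (c : ℝ), ∑ j ∈ s, d j * (x j - c)^2
      = (∑ j ∈ s, d j * x j^2) - 2*c*(∑ j ∈ s, d j * x j) + c^2*(∑ j ∈ s, d j) := by
    intro s c
    rw [Finset.mul_sum, Finset.mul_sum, ← Finset.sum_sub_distrib, ← Finset.sum_add_distrib]
    exact Finset.sum_congr rfl fun j _ => by ring
  have hv_ne : v ≠ 0 := ne_of_gt hv0
  have h1v_ne : (1:ℝ) - v ≠ 0 := ne_of_gt h1v
  have hcen0 : sCenter d x P 0 = v⁻¹ * C := by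
    rw [sCenter, hP0, hCU, ← hv_def]
  have hcen1 : sCenter d x P 1 = (1-v)⁻¹ * (-C) := by
    rw [sCenter, hP1, hCUc, hvc]
  have hvar : sVar d x P = 1 - v⁻¹*C^2 - (1-v)⁻¹*C^2 := by
    rw [sVar, Fin.sum_univ_two, hcen0, hcen1, hP0, hP1]
    rw [hexpand U (v⁻¹*C), hexpand Uᶜ ((1-v)⁻¹*(-C))]
    rw [hCU, hCUc, ← hv_def, hvc]
    have hT : (∑ j ∈ U, d j * x j^2) + (∑ j ∈ Uᶜ, d j * x j^2) = 1 := by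
      rw [Finset.sum_add_sum_compl]
      exact hsum_dx2
    have h1 : v⁻¹ * v = 1 := inv_mul_cancel₀ hv_ne
    have h2 : (1-v)⁻¹ * (1-v) = 1 := inv_mul_cancel₀ h1v_ne
    linear_combination hT + (v⁻¹*C^2)*h1 + ((1-v)⁻¹*C^2)*h2
  have hfinal : sVar d x P ≤ (1-θ)/(1-ε) := by
    rw [hvar]
    have hsplit : v⁻¹*C^2 + (1-v)⁻¹*C^2 = C^2/(v*(1-v)) := by
      field_simp
      ring
    have hge : (θ-ε)/(1-ε) ≤ C^2/(v*(1-v)) := by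
      rw [div_le_div_iff₀ hε1 (mul_pos hv0 h1v)]
      calc (θ-ε) * (v*(1-v)) ≤ (1-ε)*C^2 := hC2
        _ = C^2 * (1-ε) := by ring
    have hident : (1-θ)/(1-ε) = 1 - (θ-ε)/(1-ε) := by
      field_simp
      ring
    rw [hident]
    have h9 : (θ-ε)/(1-ε) ≤ v⁻¹*C^2 + (1-v)⁻¹*C^2 := by rw [hsplit]; exact hge
    linarith only [h9]
  -- conclusion
  have hmemS : sVar d x P ∈
      {r | ∃ P : Fin n → Fin 2, Function.Surjective P ∧ r = sVar d x P} :=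
    ⟨P, hsurj, rfl⟩
  have hbdd : BddBelow
      {r | ∃ P : Fin n → Fin 2, Function.Surjective P ∧ r = sVar d x P} := by
    refine ⟨0, ?_⟩
    rintro r ⟨P', -, rfl⟩
    rw [sVar]
    exact Finset.sum_nonneg fun a _ => Finset.sum_nonneg fun j _ =>
      mul_nonneg (hd j).le (sq_nonneg _)
  have hS2 : S2var d x ≤ sVar d x P := csInf_le hbdd hmemS
  exact le_trans hS2 hfinal


end
end
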